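/- For every integer p ≥ 2, the derivative of f_p at every x ∈ (0,1) satisfies f_p'(x) = -x^{p-1}(x^{p+1} - (p+1)x + p)/(1-x^p)^2, and there exists ε > 0 such that f_p'(x) ≤ 1 - ε for all x ∈ (0,1). -/

import Mathlib

lemma aux_deriv (p : ℕ) (hp : 2 ≤ p) (x : ℝ) (hx : x ∈ Set.Ioo (0 : ℝ) 1) :
    HasDerivAt (fun x : ℝ => 1 - x ^ p * (1 - x) / (1 - x ^ p))
      (-(x ^ (p - 1) * (x ^ (p + 1) - ((p : ℝ) + 1) * x + (p : ℝ)) / (1 - x ^ p) ^ 2)) x := by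
  obtain ⟨hx0, hx1⟩ := hx
  have hxp : x ^ p < 1 := pow_lt_one₀ hx0.le hx1 (by omega)
  have hv : (1 : ℝ) - x ^ p ≠ 0 := by linarith
  have h1 : HasDerivAt (fun y : ℝ => y ^ p) ((p : ℝ) * x ^ (p - 1)) x := hasDerivAt_pow p x
  have h2 : HasDerivAt (fun y : ℝ => 1 - y) (-1 : ℝ) x := by
    simpa using (hasDerivAt_id x).const_sub 1
  have hu : HasDerivAt (fun y : ℝ => y ^ p * (1 - y))
      ((p : ℝ) * x ^ (p - 1) * (1 - x) + x ^ p * (-1)) x := h1.mul h2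
  have hv' : HasDerivAt (fun y : ℝ => 1 - y ^ p) (-((p : ℝ) * x ^ (p - 1))) x := h1.const_sub 1
  have hdiv := hu.div hv' hv
  have hfinal := hdiv.const_sub 1
  convert hfinal using 1
  case e'_4 => rfl
  case e'_5 => rfl
  case e'_8 => rfl
  obtain ⟨k, rfl⟩ : ∃ k, p = k + 2 := ⟨p - 2, by omega⟩
  simp only [show k + 2 - 1 = k + 1 from rfl]
  field_simp
  ring

theorem stmt_1 (p : ℕ) (hp : 2 ≤ p) :
    (∀ x ∈ Set.Ioo (0 : ℝ) 1,
      HasDerivAt (fun x : ℝ => 1 - x ^ p * (1 - x) / (1 - x ^ p))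
        (-(x ^ (p - 1) * (x ^ (p + 1) - ((p : ℝ) + 1) * x + (p : ℝ)) / (1 - x ^ p) ^ 2)) x) ∧
    ∃ ε > (0 : ℝ), ∀ x ∈ Set.Ioo (0 : ℝ) 1,
      deriv (fun x : ℝ => 1 - x ^ p * (1 - x) / (1 - x ^ p)) x ≤ 1 - ε := by
  refine ⟨fun x hx => aux_deriv p hp x hx, 1, one_pos, fun x hx => ?_⟩
  have hd := (aux_deriv p hp x hx).deriv
  rw [hd]
  obtain ⟨hx0, hx1⟩ := hx
  -- numerator nonneg via Bernoulli
  have hb : 1 + ((p : ℝ) + 1) * (x - 1) ≤ (1 + (x - 1)) ^ (p + 1) := by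
    have := one_add_mul_le_pow (a := x - 1) (by linarith) (p + 1)
    simpa using this
  have hg : (0 : ℝ) ≤ x ^ (p + 1) - ((p : ℝ) + 1) * x + (p : ℝ) := by
    have : (1 + (x - 1)) ^ (p + 1) = x ^ (p + 1) := by ring_nf
    push_cast at hb ⊢
    nlinarith [hb, this]
  have hnum : (0 : ℝ) ≤ x ^ (p - 1) * (x ^ (p + 1) - ((p : ℝ) + 1) * x + (p : ℝ)) :=
    mul_nonneg (pow_nonneg hx0.le _) hg
  have : (0 : ℝ) ≤ x ^ (p - 1) * (x ^ (p + 1) - ((p : ℝ) + 1) * x + (p : ℝ)) / (1 - x ^ p) ^ 2 :=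
    div_nonneg hnum (sq_nonneg _)
  linarith
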